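/- (Theorem 1, sufficiency direction: marginal congestion pricing decentralizes the social optimum.) Suppose λ* ∈ K minimizes the social cost f(λ) = Σ_a (λ_a · s_a(λ_a) + b_a · λ_a) over K. Define the tolls ϑ_a = λ*_a · (deriv s_a)(λ*_a). Then λ* also minimizes the tolled user-equilibrium potential g(λ) = Σ_a (∫_0^{λ_a} s_a(x) dx + (b_a + ϑ_a) · λ_a) over K. -/

import Mathlib

open Filter Topology

/-- For a monotone function, the interval integral dominates the left-endpoint rectangle. -/
lemma integral_ge_const_mul {s : ℝ → ℝ} (hc : Continuous s) (hm : Monotone s)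
    (c x : ℝ) : s c * (x - c) ≤ ∫ t in c..x, s t := by
  rcases le_total c x with h | h
  · have h1 : (∫ t in c..x, (s c)) ≤ ∫ t in c..x, s t := by
      apply intervalIntegral.integral_mono_on h intervalIntegrable_const
        (hc.intervalIntegrable _ _)
      intro t ht; exact hm ht.1
    have h2 : (∫ t in c..x, (s c : ℝ)) = (x - c) * s c := by
      simp [intervalIntegral.integral_const, smul_eq_mul]
    rw [h2] at h1; linarith
  · have h1 : (∫ t in x..c, s t) ≤ ∫ t in x..c, (s c) := by
      apply intervalIntegral.integral_mono_on h (hc.intervalIntegrable _ _)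
        intervalIntegrable_const
      intro t ht; exact hm ht.2
    have h2 : (∫ t in x..c, (s c : ℝ)) = (c - x) * s c := by
      simp [intervalIntegral.integral_const, smul_eq_mul]
    have h3 : (∫ t in c..x, s t) = -(∫ t in x..c, s t) :=
      intervalIntegral.integral_symm _ _
    rw [h3]; rw [h2] at h1; linarith

/-- Theorem 1 (sufficiency): marginal congestion pricing decentralizes the social optimum.
If `lam` minimizes the social cost `f(λ) = ∑ a, (λ_a * s_a(λ_a) + b_a * λ_a)` over the convex
feasible set `K`, then with tolls `ϑ_a = lam_a * (deriv (s a)) (lam a)`, `lam` also minimizes the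
tolled user-equilibrium (Beckmann) potential
`g(λ) = ∑ a, (∫ x in 0..λ_a, s_a x + (b_a + ϑ_a) * λ_a)` over `K`. -/
theorem marginal_pricing_sufficiency {n : ℕ} (K : Set (Fin n → ℝ)) (hK : Convex ℝ K)
    (s : Fin n → ℝ → ℝ) (b : Fin n → ℝ)
    (hcont : ∀ a, Continuous (s a))
    (hdiff : ∀ a, Differentiable ℝ (s a))
    (hderiv_nonneg : ∀ a x, 0 ≤ deriv (s a) x)
    (lam : Fin n → ℝ) (hlam : lam ∈ K)
    (hmin : ∀ μ ∈ K,
      (∑ a, (lam a * s a (lam a) + b a * lam a)) ≤ ∑ a, (μ a * s a (μ a) + b a * μ a)) :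
    ∀ μ ∈ K,
      (∑ a, ((∫ x in (0:ℝ)..(lam a), s a x)
          + (b a + lam a * deriv (s a) (lam a)) * lam a))
      ≤ ∑ a, ((∫ x in (0:ℝ)..(μ a), s a x)
          + (b a + lam a * deriv (s a) (lam a)) * μ a) := by
  intro μ hμ
  set d : Fin n → ℝ := fun a => μ a - lam a with hd
  set D : ℝ := ∑ a, (s a (lam a) + lam a * deriv (s a) (lam a) + b a) * d a with hD
  have hmono : ∀ a, Monotone (s a) := fun a =>
    monotone_of_deriv_nonneg (hdiff a) (hderiv_nonneg a)
  set φ : ℝ → ℝ := fun t =>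
    ∑ a, ((lam a + t * d a) * s a (lam a + t * d a) + b a * (lam a + t * d a)) with hφ
  -- derivative of φ at 0
  have hφderiv : HasDerivAt φ D 0 := by
    rw [hD, hφ]
    apply HasDerivAt.fun_sum
    intro a _
    have hu : HasDerivAt (fun t : ℝ => lam a + t * d a) (d a) 0 := by
      simpa using ((hasDerivAt_id (0:ℝ)).mul_const (d a)).const_add (lam a)
    have hsa : HasDerivAt (s a) (deriv (s a) (lam a)) ((fun t : ℝ => lam a + t * d a) 0) := by
      have h0 : (fun t : ℝ => lam a + t * d a) 0 = lam a := by simp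
      rw [h0]
      exact (hdiff a (lam a)).hasDerivAt
    have hcomp : HasDerivAt (fun t : ℝ => s a (lam a + t * d a))
        (deriv (s a) (lam a) * d a) 0 := hsa.comp 0 hu
    have hmul : HasDerivAt (fun t : ℝ => (lam a + t * d a) * s a (lam a + t * d a))
        (d a * s a (lam a + 0 * d a) + (lam a + 0 * d a) * (deriv (s a) (lam a) * d a)) 0 :=
      hu.mul hcomp
    have hlin : HasDerivAt (fun t : ℝ => b a * (lam a + t * d a)) (b a * d a) 0 :=
      hu.const_mul (b a)
    have := hmul.fun_add hlin
    convert this using 1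
    ring
  -- first-order optimality: 0 ≤ D
  have hDnonneg : 0 ≤ D := by
    have hslope : Tendsto (slope φ 0) (𝓝[≠] (0:ℝ)) (𝓝 D) :=
      hasDerivAt_iff_tendsto_slope.mp hφderiv
    have hle : (𝓝[>] (0:ℝ)) ≤ 𝓝[≠] (0:ℝ) :=
      nhdsWithin_mono 0 (fun x hx => ne_of_gt hx)
    have hev : ∀ᶠ t in 𝓝[>] (0:ℝ), 0 ≤ slope φ 0 t := by
      filter_upwards [Ioc_mem_nhdsGT_of_mem (Set.left_mem_Ico.mpr one_pos)] with t ht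
      have ht0 : 0 < t := ht.1
      have ht1 : t ≤ 1 := ht.2
      have hmem : (fun a => lam a + t * d a) ∈ K := by
        have := hK hlam hμ (by linarith : (0:ℝ) ≤ 1 - t) ht0.le (by ring)
        convert this using 1
        funext a
        simp [hd]
        ring
      have hφ0 : φ 0 = ∑ a, (lam a * s a (lam a) + b a * lam a) := by
        simp [hφ]
      have hφt : φ 0 ≤ φ t := by
        rw [hφ0]
        exact hmin _ hmem
      have : slope φ 0 t = (φ t - φ 0) / t := by
        simp [slope_def_field, div_eq_inv_mul]
      rw [this]
      exact div_nonneg (by linarith) ht0.le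
    exact ge_of_tendsto (hslope.mono_left hle) hev
  -- Beckmann convexity: per-arc integral bound
  have key : ∀ a, (∫ x in (0:ℝ)..(lam a), s a x) + s a (lam a) * d a
      ≤ ∫ x in (0:ℝ)..(μ a), s a x := by
    intro a
    have h1 := integral_ge_const_mul (hcont a) (hmono a) (lam a) (μ a)
    have hsplit : (∫ x in (0:ℝ)..(μ a), s a x)
        = (∫ x in (0:ℝ)..(lam a), s a x) + ∫ x in (lam a)..(μ a), s a x :=
      (intervalIntegral.integral_add_adjacent_intervals
        ((hcont a).intervalIntegrable _ _) ((hcont a).intervalIntegrable _ _)).symm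
    rw [hsplit]
    simp only [hd]
    nlinarith [h1]
  have hfinal : D ≤ (∑ a, ((∫ x in (0:ℝ)..(μ a), s a x)
          + (b a + lam a * deriv (s a) (lam a)) * μ a))
      - ∑ a, ((∫ x in (0:ℝ)..(lam a), s a x)
          + (b a + lam a * deriv (s a) (lam a)) * lam a) := by
    rw [hD, ← Finset.sum_sub_distrib]
    apply Finset.sum_le_sum
    intro a _
    have h1 := key a
    simp only [hd] at h1 ⊢
    nlinarith [h1]
  linarith
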